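/- Let g(x) = max_{j∈J} g_j(x) with J finite and g_j ∈ C¹(X). Then ⋃_{p∈S, g'(x̄;p)>0} Argmax_{v∈∂g(x̄)} ⟨v,p⟩ ⊆ Limsup_{x→x̄, g(x)>g(x̄)} ∂g(x), where ∂g(x) = conv{∇g_j(x) : j ∈ J(x)} is the Fréchet subdifferential and Limsup is the outer limit. -/

import Mathlib

open Filter Topology Set Metric
open scoped RealInnerProductSpace

noncomputable section

/-- `n`-dimensional Euclidean space. -/
abbrev En (n : ℕ) := EuclideanSpace ℝ (Fin n)

/-- `d` is the Hadamard directional derivative map of `f` at `x`: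
for each direction `p`, `(f (x + t • p') - f x)/t → d p` as `t ↓ 0`, `p' → p`. -/
def HadamardDD {n : ℕ} (f : En n → ℝ) (x : En n) (d : En n → ℝ) : Prop :=
  ∀ p : En n,
    Tendsto (fun q : ℝ × En n => (f (x + q.1 • q.2) - f x) / q.1)
      ((𝓝[>] (0 : ℝ)) ×ˢ 𝓝 p) (𝓝 (d p))

/-- The Fréchet subdifferential of `f` at `x`. -/
def FSubdiff {n : ℕ} (f : En n → ℝ) (x : En n) : Set (En n) :=
  {v | ∀ ε > (0 : ℝ), ∀ᶠ y in 𝓝 x, f y - f x - ⟪v, y - x⟫ ≥ -ε * ‖y - x‖}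

/-- The outer (Painlevé–Kuratowski) limit of Fréchet subdifferentials of `f`
along sequences `x_k → xb` with `f x_k > f xb`. -/
def OuterLim {n : ℕ} (f : En n → ℝ) (xb : En n) : Set (En n) :=
  {y | ∃ xk yk : ℕ → En n, Tendsto xk atTop (𝓝 xb) ∧ (∀ k, f xb < f (xk k)) ∧
    (∀ k, yk k ∈ FSubdiff f (xk k)) ∧ Tendsto yk atTop (𝓝 y)}

lemma grad_mem_FSubdiff {n : ℕ} {g f : En n → ℝ} {x : En n}
    (hle : ∀ y, f y ≤ g y) (heq : f x = g x) (hd : DifferentiableAt ℝ f x) :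
    gradient f x ∈ FSubdiff g x := by
  intro ε hε
  have h := hd.hasGradientAt
  rw [hasGradientAt_iff_hasFDerivAt, hasFDerivAt_iff_isLittleO] at h
  filter_upwards [h.def hε] with y hy
  simp only [InnerProductSpace.toDual_apply_apply, Real.norm_eq_abs] at hy
  have h2 := abs_le.mp hy
  have h3 := hle y
  simp only [ge_iff_le, neg_mul]
  linarith [h2.1]

lemma min_mem_FSubdiff {n : ℕ} {g : En n → ℝ} {v xt y₀ : En n} {t ρ : ℝ}
    (ht : 0 < t) (hρ : 0 < ρ)
    (hmin : ∀ y ∈ ball y₀ ρ,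
      g y₀ - ⟪v, y₀⟫ + (1/t) * ‖y₀ - xt‖^2 ≤ g y - ⟪v, y⟫ + (1/t) * ‖y - xt‖^2) :
    v - (2/t) • (y₀ - xt) ∈ FSubdiff g y₀ := by
  intro ε hε
  have hεt : 0 < ε * t := by positivity
  filter_upwards [Metric.ball_mem_nhds y₀ (lt_min hρ hεt)] with y hy
  have hy1 : y ∈ ball y₀ ρ := mem_ball.mpr (lt_of_lt_of_le (mem_ball.mp hy) (min_le_left _ _))
  have hy2 : ‖y - y₀‖ < ε * t := by
    have := mem_ball.mp hy
    rw [dist_eq_norm] at this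
    exact lt_of_lt_of_le this (min_le_right _ _)
  have hexp : ‖y - xt‖^2 = ‖y - y₀‖^2 + 2*⟪y - y₀, y₀ - xt⟫ + ‖y₀ - xt‖^2 := by
    have := norm_add_sq_real (y - y₀) (y₀ - xt)
    rwa [sub_add_sub_cancel] at this
  have hexp' : (1/t) * ‖y - xt‖^2
      = (1/t) * ‖y - y₀‖^2 + (2/t)*⟪y - y₀, y₀ - xt⟫ + (1/t)*‖y₀ - xt‖^2 := by
    rw [hexp]; ring
  have hinner : ⟪v - (2/t) • (y₀ - xt), y - y₀⟫
      = ⟪v, y - y₀⟫ - (2/t) * ⟪y - y₀, y₀ - xt⟫ := by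
    rw [inner_sub_left, real_inner_smul_left, real_inner_comm (y - y₀) (y₀ - xt)]
  have hvsub : ⟪v, y - y₀⟫ = ⟪v, y⟫ - ⟪v, y₀⟫ := inner_sub_right v y y₀
  have hm := hmin y hy1
  have hnn : (1/t) * ‖y - y₀‖^2 ≤ ε * ‖y - y₀‖ := by
    rw [div_mul_eq_mul_div, div_le_iff₀ ht]
    nlinarith [norm_nonneg (y - y₀)]
  simp only [ge_iff_le, neg_mul]
  linarith [hm, hexp', hinner, hvsub, hnn]

lemma g_continuousAt {n : ℕ} {ι : Type*} [Fintype ι] {gj : ι → En n → ℝ} {g : En n → ℝ}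
    (hg : ∀ x, IsGreatest (Set.range fun j => gj j x) (g x)) {x : En n}
    (hc : ∀ j, ContinuousAt (gj j) x) : ContinuousAt g x := by
  obtain ⟨j0, -⟩ := (hg x).1
  have hne : (Finset.univ : Finset ι).Nonempty := ⟨j0, Finset.mem_univ _⟩
  have hgeq : g = fun y => Finset.univ.sup' hne (fun j => gj j y) := by
    funext y
    apply le_antisymm
    · obtain ⟨j, hj⟩ := (hg y).1
      rw [← hj]
      exact Finset.le_sup' (fun j => gj j y) (Finset.mem_univ j)
    · exact Finset.sup'_le _ _ fun j _ => (hg y).2 ⟨j, rfl⟩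
  rw [hgeq]
  exact ContinuousAt.finset_sup'_apply hne fun j _ => hc j

set_option maxHeartbeats 1000000 in
/-- for a finite pointwise maximum of `C¹` functions, the union of the
support faces of `∂g(xb)` exposed by unit directions `p` with `g'(xb;p) > 0` is
contained in the outer limit of Fréchet subdifferentials along `x → xb`, `g x > g xb`. -/
theorem union_argmax_subset_outerLim_max {n : ℕ} {ι : Type*} [Fintype ι]
    (X : Set (En n)) (hX : IsOpen X)
    (gj : ι → En n → ℝ) (hC1 : ∀ j, ContDiffOn ℝ 1 (gj j) X)
    (g : En n → ℝ)
    (hg : ∀ x : En n, IsGreatest (Set.range fun j => gj j x) (g x))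
    (xb : En n) (hxb : xb ∈ X) :
    (⋃ p ∈ {p : En n | ‖p‖ = 1 ∧ ∃ j : ι, gj j xb = g xb ∧ 0 < ⟪gradient (gj j) xb, p⟫},
      {v ∈ FSubdiff g xb | ∀ w ∈ FSubdiff g xb, ⟪w, p⟫ ≤ ⟪v, p⟫})
    ⊆ OuterLim g xb := by
  intro v hv
  simp only [mem_iUnion, mem_setOf_eq, exists_prop] at hv
  obtain ⟨p, ⟨hp1, j₀, hj₀act, hj₀pos⟩, hvF, hvmax⟩ := hv
  have hdiff : ∀ (j : ι) (x : En n), x ∈ X → DifferentiableAt ℝ (gj j) x := fun j x hx =>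
    ((hC1 j).differentiableOn one_ne_zero).differentiableAt (hX.mem_nhds hx)
  have hgle : ∀ (j : ι) (y : En n), gj j y ≤ g y := fun j y => (hg y).2 ⟨j, rfl⟩
  have hgradmem : ∀ j : ι, gj j xb = g xb → gradient (gj j) xb ∈ FSubdiff g xb :=
    fun j hj => grad_mem_FSubdiff (hgle j) hj (hdiff j xb hxb)
  set c := (⟪v, p⟫ : ℝ) with hcdef
  have hcpos : 0 < c := lt_of_lt_of_le hj₀pos (hvmax _ (hgradmem j₀ hj₀act))
  have hCvnn : (0:ℝ) ≤ ‖v‖ := norm_nonneg v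
  -- Core claim
  have core : ∀ δ > (0:ℝ), ∃ x y : En n,
      dist x xb < δ ∧ g xb < g x ∧ y ∈ FSubdiff g x ∧ dist y v < δ := by
    intro δ hδ
    set Cv := ‖v‖ with hCv
    set η := min 1 (min (δ/7) (c/(3*Cv+5))) with hηdef
    have hηpos : 0 < η := lt_min one_pos (lt_min (by positivity) (by positivity))
    have hη1 : η ≤ 1 := min_le_left _ _
    have hηδ : η ≤ δ/7 := le_trans (min_le_right _ _) (min_le_left _ _)
    have hηc : η ≤ c/(3*Cv+5) := le_trans (min_le_right _ _) (min_le_right _ _)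
    set ε := η^2 with hεdef
    have hεpos : 0 < ε := by positivity
    have hεη : ε ≤ η := by nlinarith
    -- radius r
    obtain ⟨r, hrpos, hr⟩ := Metric.eventually_nhds_iff_ball.mp
      ((hvF ε hεpos).and (hX.eventually_mem hxb))
    -- bound along the ray
    have hpath : Tendsto (fun t : ℝ => xb + t • p) (𝓝[>] 0) (𝓝 xb) := by
      have h0 : Tendsto (fun t : ℝ => xb + t • p) (𝓝 0) (𝓝 (xb + (0:ℝ) • p)) :=
        ((tendsto_id.smul_const p).const_add xb)
      simpa using h0.mono_left nhdsWithin_le_nhds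
    have h3 : ∀ᶠ t in 𝓝[>] (0:ℝ), ∀ j, gj j (xb + t • p) ≤ g xb + t * (c + ε) := by
      rw [eventually_all]
      intro j
      rcases eq_or_lt_of_le (hgle j xb) with hact | hina
      · have hgrad := (hdiff j xb hxb).hasGradientAt
        rw [hasGradientAt_iff_hasFDerivAt,
          hasFDerivAt_iff_isLittleO] at hgrad
        have hcj : ⟪gradient (gj j) xb, p⟫ ≤ c := hvmax _ (hgradmem j hact)
        filter_upwards [hpath.eventually (hgrad.def hεpos), self_mem_nhdsWithin]
          with t hbt htpos
        simp only [InnerProductSpace.toDual_apply_apply, add_sub_cancel_left,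
          Real.norm_eq_abs] at hbt
        rw [real_inner_smul_right] at hbt
        have htpos' : (0:ℝ) < t := htpos
        have hnrm : ‖t • p‖ = t := by
          rw [norm_smul, Real.norm_eq_abs, abs_of_pos htpos', hp1, mul_one]
        rw [hnrm] at hbt
        have h2 := (abs_le.mp hbt).2
        have : t * ⟪gradient (gj j) xb, p⟫ ≤ t * c :=
          mul_le_mul_of_nonneg_left hcj htpos'.le
        nlinarith [hact]
      · have hco : Tendsto (fun t : ℝ => gj j (xb + t • p)) (𝓝[>] 0) (𝓝 (gj j xb)) :=
          ((hdiff j xb hxb).continuousAt.tendsto).comp hpath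
        filter_upwards [hco.eventually_lt_const hina, self_mem_nhdsWithin]
          with t hlt htpos
        have htpos' : (0:ℝ) < t := htpos
        nlinarith [hcpos, hεpos]
    -- choose t
    obtain ⟨t, ht3, htpos, htsmall⟩ :
        ∃ t : ℝ, (∀ j, gj j (xb + t • p) ≤ g xb + t * (c + ε)) ∧ 0 < t ∧
          t < min (r/8) (δ/5) := by
      have hm : (0:ℝ) < min (r/8) (δ/5) := lt_min (by positivity) (by positivity)
      have hIoo : ∀ᶠ s in 𝓝[>] (0:ℝ), s ∈ Ioo (0:ℝ) (min (r/8) (δ/5)) :=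
        Ioo_mem_nhdsGT_of_mem ⟨le_refl 0, hm⟩
      obtain ⟨t, h1, h2⟩ := (h3.and hIoo).exists
      exact ⟨t, h1, h2.1, h2.2⟩
    have htr : t < r/8 := lt_of_lt_of_le htsmall (min_le_left _ _)
    have htδ : t < δ/5 := lt_of_lt_of_le htsmall (min_le_right _ _)
    set xt := xb + t • p with hxtdef
    have hxtnorm : ‖xt - xb‖ = t := by
      rw [hxtdef, add_sub_cancel_left, norm_smul, Real.norm_eq_abs, abs_of_pos htpos,
        hp1, mul_one]
    set K := closedBall xb (r/2) with hKdef
    have hKsub : K ⊆ ball xb r := closedBall_subset_ball (by linarith)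
    have hXK : ∀ y ∈ K, (g y - g xb - ⟪v, y - xb⟫ ≥ -ε * ‖y - xb‖) ∧ y ∈ X :=
      fun y hy => hr y (hKsub hy)
    have hφc : ContinuousOn (fun y => g y - ⟪v, y⟫ + (1/t) * ‖y - xt‖^2) K := by
      apply ContinuousOn.add
      · apply ContinuousOn.sub
        · exact fun y hy => (g_continuousAt hg
            (fun j => (hdiff j y (hXK y hy).2).continuousAt)).continuousWithinAt
        · exact (continuous_const.inner continuous_id).continuousOn
      · exact (continuous_const.mul
          (((continuous_id.sub continuous_const).norm).pow 2)).continuousOn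
    obtain ⟨y₀, hy₀K, hy₀min⟩ := (isCompact_closedBall xb (r/2)).exists_isMinOn
      ⟨xb, mem_closedBall_self (by positivity)⟩ hφc
    rw [isMinOn_iff] at hy₀min
    set s := ‖y₀ - xt‖ with hsdef
    have hsnn : 0 ≤ s := norm_nonneg _
    have hxtK : xt ∈ K := by
      rw [hKdef, mem_closedBall, dist_eq_norm, hxtnorm]; linarith
    have hmin1 := hy₀min xt hxtK
    have hgxt : g xt ≤ g xb + t * (c + ε) := by
      obtain ⟨jm, hjm⟩ := (hg xt).1
      rw [← hjm]; exact ht3 jm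
    have hy₀low := (hXK y₀ hy₀K).1
    have hvxt : ⟪v, xt - xb⟫ = t * c := by
      rw [hxtdef, add_sub_cancel_left, real_inner_smul_right, hcdef]
    have hnorm_split : ‖y₀ - xb‖ ≤ s + t := by
      calc ‖y₀ - xb‖ = ‖(y₀ - xt) + (xt - xb)‖ := by rw [sub_add_sub_cancel]
      _ ≤ s + ‖xt - xb‖ := norm_add_le _ _
      _ = s + t := by rw [hxtnorm]
    have hkey : (1/t) * s^2 ≤ 2*ε*t + ε*s := by
      have e0 : ‖xt - xt‖ = 0 := by simp
      have hip : ⟪v, y₀ - xb⟫ = ⟪v, y₀⟫ - ⟪v, xb⟫ := inner_sub_right v y₀ xb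
      have hip2 : ⟪v, xt - xb⟫ = ⟪v, xt⟫ - ⟪v, xb⟫ := inner_sub_right v xt xb
      have hεn : ε * ‖y₀ - xb‖ ≤ ε * (s + t) :=
        mul_le_mul_of_nonneg_left hnorm_split hεpos.le
      rw [e0] at hmin1
      have e0' : (0:ℝ)^2 = 0 := by norm_num
      rw [e0', mul_zero, add_zero] at hmin1
      linarith [hmin1, hgxt, hy₀low, hvxt, hip, hip2, hεn]
    have hst : s ≤ 3*η*t := by
      have h5 : s^2 ≤ 5*ε*t^2 := by
        have := mul_le_mul_of_nonneg_left hkey htpos.le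
        have heq1 : t * ((1/t) * s^2) = s^2 := by field_simp
        nlinarith [sq_nonneg (ε*t - s), hεpos, hεη, hηpos, sq_nonneg t]
      have h9 : s^2 ≤ (3*η*t)^2 := by nlinarith [hεpos, sq_nonneg t]
      nlinarith [hsnn, mul_pos hηpos htpos]
    have hy₀xb : ‖y₀ - xb‖ ≤ 4*t := by nlinarith [hnorm_split, hst, hη1, htpos]
    have hρpos : 0 < r/2 - ‖y₀ - xb‖ := by linarith
    have hsub : ball y₀ (r/2 - ‖y₀ - xb‖) ⊆ K := by
      intro z hz
      rw [mem_ball, dist_eq_norm] at hz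
      rw [hKdef, mem_closedBall, dist_eq_norm]
      calc ‖z - xb‖ ≤ ‖z - y₀‖ + ‖y₀ - xb‖ := norm_sub_le_norm_sub_add_norm_sub z y₀ xb
      _ ≤ r/2 := by linarith
    have hwF : v - (2/t) • (y₀ - xt) ∈ FSubdiff g y₀ :=
      min_mem_FSubdiff htpos hρpos (fun y hy => hy₀min y (hsub hy))
    refine ⟨y₀, v - (2/t) • (y₀ - xt), ?_, ?_, hwF, ?_⟩
    · rw [dist_eq_norm]; linarith
    · have hip3 : ⟪v, y₀ - xb⟫ = ⟪v, y₀ - xt⟫ + t*c := by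
        rw [← hvxt, ← inner_add_right]
        congr 1; abel
      have habs : |⟪v, y₀ - xt⟫| ≤ Cv * s := abs_real_inner_le_norm v (y₀ - xt)
      have hclast : (3*Cv+4)*η < c := by
        have h35 : (0:ℝ) < 3*Cv+5 := by positivity
        rw [le_div_iff₀ h35] at hηc
        nlinarith
      have e2 : -(Cv * s) ≤ ⟪v, y₀ - xt⟫ := neg_le_of_abs_le habs
      have e3 : Cv * s ≤ Cv * (3*η*t) := mul_le_mul_of_nonneg_left hst hCvnn
      have e4 : ε * ‖y₀ - xb‖ ≤ ε * (4*t) := mul_le_mul_of_nonneg_left hy₀xb hεpos.le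
      nlinarith [hy₀low, hip3, e2, e3, e4, hεη, mul_pos htpos hηpos, htpos,
        mul_le_mul_of_nonneg_right hεη (by linarith : (0:ℝ) ≤ 4*t),
        mul_pos htpos (show (0:ℝ) < c - (3*Cv+4)*η by linarith)]
    · rw [dist_eq_norm]
      have : v - (2/t) • (y₀ - xt) - v = -((2/t) • (y₀ - xt)) := by abel
      rw [this, norm_neg, norm_smul, Real.norm_eq_abs, abs_of_pos (by positivity : (0:ℝ) < 2/t)]
      have h1 : (2/t) * s ≤ (2/t) * (3*η*t) :=
        mul_le_mul_of_nonneg_left hst (by positivity)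
      have h2 : (2/t) * (3*η*t) = 6*η := by field_simp; ring
      linarith [h1, h2.le, hηδ, hδ]
  -- build sequences
  have H : ∀ k : ℕ, ∃ x y : En n, dist x xb < 1/(k+1) ∧ g xb < g x ∧
      y ∈ FSubdiff g x ∧ dist y v < 1/(k+1) := fun k => core (1/(k+1)) (by positivity)
  choose xk yk h1 h2 h3 h4 using H
  have hle1 : ∀ N k : ℕ, N ≤ k → (1:ℝ)/(k+1) ≤ 1/(N+1) := by
    intro N k hk
    apply one_div_le_one_div_of_le (by positivity)
    exact_mod_cast Nat.succ_le_succ hk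
  refine ⟨xk, yk, ?_, h2, h3, ?_⟩
  · rw [Metric.tendsto_atTop]
    intro ε hε
    obtain ⟨N, hN⟩ := exists_nat_one_div_lt hε
    exact ⟨N, fun k hk => lt_of_lt_of_le (h1 k) ((hle1 N k hk).trans hN.le)⟩
  · rw [Metric.tendsto_atTop]
    intro ε hε
    obtain ⟨N, hN⟩ := exists_nat_one_div_lt hε
    exact ⟨N, fun k hk => lt_of_lt_of_le (h4 k) ((hle1 N k hk).trans hN.le)⟩
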